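/- Let λ₁, λ₂, λ₃ be real numbers with λ₁ + λ₂ + λ₃ = 0, set μ₁ = λ₃ − λ₂, μ₂ = λ₁ − λ₃, μ₃ = λ₂ − λ₁, and let J ∈ ℝ. Suppose γ : ℝ → ℝ is differentiable and satisfies, for all t, (1/4)(γ′(t))² + J² = μ₁μ₂μ₃·γ(t)³ + (γ(t)²/3)·(μ₁μ₂ + μ₂μ₃ + μ₃μ₁) + 1/27. Then the function y(t) := −μ₁μ₂μ₃·γ(t) + (λ₁² + λ₂² + λ₃²)/3 satisfies, for all t, (y′(t))² + 4y(t)³ − 2y(t)²(λ₁² + λ₂² + λ₃²) = −4(λ₁²λ₂²λ₃² + J²μ₁²μ₂²μ₃²). -/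
import Mathlib


/-- The conformal factor y satisfies the cubic ODE derived from the ODE for γ. -/
theorem stmt_1 (l₁ l₂ l₃ : ℝ) (hl : l₁ + l₂ + l₃ = 0)
    (μ₁ μ₂ μ₃ : ℝ) (hμ₁ : μ₁ = l₃ - l₂) (hμ₂ : μ₂ = l₁ - l₃) (hμ₃ : μ₃ = l₂ - l₁)
    (J : ℝ) (γ : ℝ → ℝ) (hγ : Differentiable ℝ γ)
    (hode : ∀ t : ℝ, (1 / 4) * (deriv γ t) ^ 2 + J ^ 2 =
      μ₁ * μ₂ * μ₃ * (γ t) ^ 3 + ((γ t) ^ 2 / 3) * (μ₁ * μ₂ + μ₂ * μ₃ + μ₃ * μ₁) + 1 / 27)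
    (y : ℝ → ℝ) (hy : ∀ t : ℝ, y t = -(μ₁ * μ₂ * μ₃) * γ t + (l₁ ^ 2 + l₂ ^ 2 + l₃ ^ 2) / 3) :
    ∀ t : ℝ, (deriv y t) ^ 2 + 4 * (y t) ^ 3 - 2 * (y t) ^ 2 * (l₁ ^ 2 + l₂ ^ 2 + l₃ ^ 2) =
      -4 * (l₁ ^ 2 * l₂ ^ 2 * l₃ ^ 2 + J ^ 2 * (μ₁ ^ 2 * μ₂ ^ 2 * μ₃ ^ 2)) := by
  intro t
  have hyf : y = fun t => -(μ₁ * μ₂ * μ₃) * γ t + (l₁ ^ 2 + l₂ ^ 2 + l₃ ^ 2) / 3 := funext hy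
  have hdy : deriv y t = -(μ₁ * μ₂ * μ₃) * deriv γ t := by
    rw [hyf]
    rw [deriv_add_const]
    exact deriv_const_mul _ (hγ t)
  have h3 : l₃ = -(l₁ + l₂) := by linarith
  rw [hdy, hy t]
  subst hμ₁ hμ₂ hμ₃ h3
  linear_combination (4 * ((-(l₁ + l₂) - l₂) * (l₁ - -(l₁ + l₂)) * (l₂ - l₁)) ^ 2) * hode t
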